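/- For every μ > 0 and r ∈ ℕ with r ≥ 2, if k is sufficiently large, R is a k-vertex graph with δ(R) ≥ (1 − 1/r + μ)k, and x, y are two disjoint r-tuples of vertices each spanning a copy of K_r, then there exists a good walk Q = (S_1,...,S_ℓ) in R with ℓ ≤ 100r⁵, head x and tail y, such that the last lazy element S_q (if any) satisfies q ≤ ℓ − 20(r+1). -/

import Mathlib

def Lazy {V : Type*} (S : ℕ → V) (ℓ i : ℕ) : Prop := i + 1 < ℓ ∧ S i = S (i + 1)

def IsWalk {V : Type*} [DecidableEq V] (r : ℕ) (R : SimpleGraph V) (S : ℕ → V)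
    (ℓ : ℕ) : Prop :=
  ∀ a, a + r + 1 ≤ ℓ →
    R.IsClique ↑((Finset.range (r + 1)).image fun j => S (a + j)) ∧
    (((Finset.range (r + 1)).image fun j => S (a + j)).card = r + 1 ∨
      ((Finset.range (r + 1)).image fun j => S (a + j)).card = r) ∧
    ∀ i j, a ≤ i → i < j → j ≤ a + r → S i = S j → j = i + 1

def IsGoodWalk {V : Type*} [DecidableEq V] (r : ℕ) (R : SimpleGraph V) (S : ℕ → V)
    (ℓ : ℕ) : Prop :=
  IsWalk r R S ℓ ∧
  ((∃ i, Lazy S ℓ i) → Lazy S ℓ r ∧ ∀ i, Lazy S ℓ i → r ≤ i) ∧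
  ∀ i j, Lazy S ℓ i → Lazy S ℓ j → i < j → 20 * (r + 1) ≤ j - i

namespace WkAux

variable {V : Type*} [DecidableEq V]

/-- All pairs of positions within distance `r` are either a designated adjacent
repetition (element of `D`) or distinct and adjacent. -/
def Pairs (r : ℕ) (R : SimpleGraph V) (S : ℕ → V) (ℓ : ℕ) (D : Set ℕ) : Prop :=
  ∀ ⦃i j : ℕ⦄, i < j → j < ℓ → j ≤ i + r →
    (i ∈ D ∧ j = i + 1 ∧ S i = S j) ∨ (S i ≠ S j ∧ R.Adj (S i) (S j))

variable {r : ℕ} {R : SimpleGraph V} {S : ℕ → V} {ℓ : ℕ} {D : Set ℕ}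

theorem pairs_mono {D' : Set ℕ} (hDD : D ⊆ D') (h : Pairs r R S ℓ D) :
    Pairs r R S ℓ D' := by
  intro i j h1 h2 h3
  rcases h h1 h2 h3 with h | h
  · exact Or.inl ⟨hDD h.1, h.2⟩
  · exact Or.inr h

/-- Appending a new vertex distinct from and adjacent to everything in the last
`r` positions. -/
theorem pairs_append (hP : Pairs r R S ℓ D) (hrℓ : r ≤ ℓ) (v : V)
    (hv : ∀ i, ℓ - r ≤ i → i < ℓ → S i ≠ v ∧ R.Adj (S i) v) :
    Pairs r R (Function.update S ℓ v) (ℓ + 1) D := by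
  intro i j h1 h2 h3
  rcases Nat.lt_or_ge j ℓ with hj | hj
  · have hi : i < ℓ := lt_trans h1 hj
    have e1 : Function.update S ℓ v i = S i := Function.update_of_ne (by omega) _ _
    have e2 : Function.update S ℓ v j = S j := Function.update_of_ne (by omega) _ _
    rw [e1, e2]; exact hP h1 hj h3
  · have hjℓ : j = ℓ := by omega
    have hi : i < ℓ := by omega
    have e1 : Function.update S ℓ v i = S i := Function.update_of_ne (by omega) _ _
    have e2 : Function.update S ℓ v j = v := by rw [hjℓ]; exact Function.update_self _ _ _
    rw [e1, e2]
    exact Or.inr (hv i (by omega) hi)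

/-- Appending a lazy repetition of the last vertex. -/
theorem pairs_append_lazy (hP : Pairs r R S ℓ D) (hrℓ : 1 ≤ ℓ)
    (hrec : ∀ d ∈ D, d + r + 1 < ℓ) :
    Pairs r R (Function.update S ℓ (S (ℓ - 1))) (ℓ + 1) (insert (ℓ - 1) D) := by
  intro i j h1 h2 h3
  rcases Nat.lt_or_ge j ℓ with hj | hj
  · have hi : i < ℓ := lt_trans h1 hj
    have e1 : Function.update S ℓ (S (ℓ-1)) i = S i := Function.update_of_ne (by omega) _ _
    have e2 : Function.update S ℓ (S (ℓ-1)) j = S j := Function.update_of_ne (by omega) _ _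
    rw [e1, e2]
    exact pairs_mono (Set.subset_insert _ _) hP h1 hj h3
  · have hjℓ : j = ℓ := by omega
    have hi : i < ℓ := by omega
    have e1 : Function.update S ℓ (S (ℓ-1)) i = S i := Function.update_of_ne (by omega) _ _
    have e2 : Function.update S ℓ (S (ℓ-1)) j = S (ℓ - 1) := by
      rw [hjℓ]; exact Function.update_self _ _ _
    rw [e1, e2]
    rcases Nat.lt_or_ge i (ℓ - 1) with hi1 | hi1
    · -- i < ℓ - 1 : use pair (i, ℓ-1)
      have := hP (j := ℓ - 1) hi1 (by omega) (by omega)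
      rcases this with h | h
      · exfalso; have := hrec i h.1; omega
      · exact Or.inr h
    · have : i = ℓ - 1 := by omega
      subst this
      exact Or.inl ⟨Set.mem_insert _ _, by omega, rfl⟩

theorem lazy_iff (hr : 1 ≤ r) (hP : Pairs r R S ℓ D)
    (hD : ∀ d ∈ D, d + 1 < ℓ ∧ S d = S (d + 1)) :
    ∀ q, Lazy S ℓ q ↔ q ∈ D := by
  intro q
  constructor
  · rintro ⟨h1, h2⟩
    rcases hP (i := q) (j := q + 1) (by omega) h1 (by omega) with h | h
    · exact h.1
    · exact absurd h2 h.1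
  · intro hq
    exact ⟨(hD q hq).1, (hD q hq).2⟩

theorem master (hr : 1 ≤ r) (hP : Pairs r R S ℓ D)
    (hD : ∀ d ∈ D, r ≤ d ∧ d + 1 < ℓ ∧ S d = S (d + 1))
    (hDr : D.Nonempty → r ∈ D)
    (hsp : ∀ d ∈ D, ∀ e ∈ D, d < e → d + 20 * (r + 1) ≤ e)
    (hfar : ∀ d ∈ D, d + 20 * (r + 1) < ℓ) :
    IsGoodWalk r R S ℓ ∧ ∀ q, Lazy S ℓ q → q + 20 * (r + 1) < ℓ := by
  have hlz : ∀ q, Lazy S ℓ q ↔ q ∈ D :=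
    lazy_iff hr hP (fun d hd => ⟨(hD d hd).2.1, (hD d hd).2.2⟩)
  have hwalk : IsWalk r R S ℓ := by
    intro a ha
    refine ⟨?_, ?_, ?_⟩
    · -- clique
      rw [SimpleGraph.isClique_iff]
      rintro u hu v hv huv
      simp only [Finset.coe_image, Set.mem_image, Finset.mem_coe, Finset.mem_range] at hu hv
      obtain ⟨j₁, hj₁, rfl⟩ := hu
      obtain ⟨j₂, hj₂, rfl⟩ := hv
      have hne : j₁ ≠ j₂ := by rintro rfl; exact huv rfl
      rcases Nat.lt_or_ge j₁ j₂ with hlt | hge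
      · rcases hP (i := a + j₁) (j := a + j₂) (by omega) (by omega) (by omega) with h | h
        · exact absurd h.2.2 huv
        · exact h.2
      · have hlt : j₂ < j₁ := by omega
        rcases hP (i := a + j₂) (j := a + j₁) (by omega) (by omega) (by omega) with h | h
        · exact absurd h.2.2.symm huv
        · exact h.2.symm
    · -- card
      by_cases hex : ∃ d ∈ D, a ≤ d ∧ d < a + r
      · right
        obtain ⟨d, hdD, hd1, hd2⟩ := hex
        have huniq : ∀ d' ∈ D, a ≤ d' → d' < a + r → d' = d := by
          intro d' hd' h1 h2
          by_contra hne
          rcases Nat.lt_or_ge d' d with h | h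
          · have := hsp d' hd' d hdD h; omega
          · have := hsp d hdD d' hd' (by omega); omega
        set e := d - a + 1 with he
        have hea : a + e = d + 1 := by omega
        have heR : e ∈ Finset.range (r + 1) := by simp [he]; omega
        have himeq : (Finset.range (r + 1)).image (fun j => S (a + j)) =
            ((Finset.range (r + 1)).erase e).image (fun j => S (a + j)) := by
          apply le_antisymm
          · intro u hu
            simp only [Finset.mem_image, Finset.mem_range, Finset.mem_erase] at hu ⊢
            obtain ⟨j, hj, rfl⟩ := hu
            by_cases hje : j = e
            · refine ⟨e - 1, ⟨by omega, by omega⟩, ?_⟩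
              have : a + (e - 1) = d := by omega
              rw [this, hje, hea, ← (hD d hdD).2.2]
            · exact ⟨j, ⟨hje, hj⟩, rfl⟩
          · exact Finset.image_subset_image (Finset.erase_subset _ _)
        rw [himeq]
        have hinj : Set.InjOn (fun j => S (a + j)) ((Finset.range (r + 1)).erase e) := by
          intro j₁ hj₁ j₂ hj₂ heq
          simp only [Finset.coe_erase, Set.mem_diff, Finset.coe_range, Set.mem_Iio,
            Set.mem_singleton_iff, Finset.mem_coe, Finset.mem_erase, Finset.mem_range] at hj₁ hj₂
          by_contra hne
          -- wlog j₁ < j₂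
          rcases Nat.lt_or_ge j₁ j₂ with hlt | hge
          · rcases hP (i := a + j₁) (j := a + j₂) (by omega) (by omega) (by omega) with h | h
            · obtain ⟨hmem, hsucc, -⟩ := h
              have : a + j₁ = d := huniq _ hmem (by omega) (by omega)
              have : j₂ = e := by omega
              exact hj₂.2 this
            · exact h.1 heq
          · have hlt : j₂ < j₁ := by omega
            rcases hP (i := a + j₂) (j := a + j₁) (by omega) (by omega) (by omega) with h | h
            · obtain ⟨hmem, hsucc, -⟩ := h
              have : a + j₂ = d := huniq _ hmem (by omega) (by omega)
              have : j₁ = e := by omega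
              exact hj₁.2 this
            · exact h.1 heq.symm
        rw [Finset.card_image_of_injOn hinj, Finset.card_erase_of_mem heR,
          Finset.card_range]
        omega
      · left
        have hinj : Set.InjOn (fun j => S (a + j)) (Finset.range (r + 1)) := by
          intro j₁ hj₁ j₂ hj₂ heq
          simp only [Finset.coe_range, Set.mem_Iio] at hj₁ hj₂
          by_contra hne
          rcases Nat.lt_or_ge j₁ j₂ with hlt | hge
          · rcases hP (i := a + j₁) (j := a + j₂) (by omega) (by omega) (by omega) with h | h
            · exact hex ⟨a + j₁, h.1, by omega, by omega⟩
            · exact h.1 heq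
          · have hlt : j₂ < j₁ := by omega
            rcases hP (i := a + j₂) (j := a + j₁) (by omega) (by omega) (by omega) with h | h
            · exact hex ⟨a + j₂, h.1, by omega, by omega⟩
            · exact h.1 heq.symm
        rw [Finset.card_image_of_injOn hinj, Finset.card_range]
    · -- repetitions adjacent
      intro i j h1 h2 h3 hS
      rcases hP h2 (by omega) (by omega) with h | h
      · exact h.2.1
      · exact absurd hS h.1
  refine ⟨⟨hwalk, ?_, ?_⟩, ?_⟩
  · rintro ⟨i, hi⟩
    have hiD : i ∈ D := (hlz i).1 hi
    have hrD : r ∈ D := hDr ⟨i, hiD⟩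
    refine ⟨(hlz r).2 hrD, ?_⟩
    intro q hq
    exact (hD q ((hlz q).1 hq)).1
  · intro i j hi hj hij
    have := hsp i ((hlz i).1 hi) j ((hlz j).1 hj) hij
    omega
  · intro q hq
    exact hfar q ((hlz q).1 hq)


variable {c : ℕ → V} {p g : ℕ}

/-- choose a common neighbour of `A` avoiding `F` -/
theorem choose_adj {k r : ℕ} {μ : ℝ} (hk0 : 0 < k) (hr : 1 ≤ r)
    (R : SimpleGraph (Fin k))
    (hdeg : ∀ v : Fin k, (1 - 1 / (r : ℝ) + μ) * k ≤ ((R.neighborSet v).ncard : ℝ))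
    (A F : Finset (Fin k)) (hA : A.card ≤ r)
    (hbig : (F.card : ℝ) + 1 ≤ (r : ℝ) * μ * k) :
    ∃ v : Fin k, v ∉ F ∧ ∀ a ∈ A, R.Adj a v := by
  classical
  have hdeg' : ∀ v : Fin k, (1 - 1 / (r : ℝ) + μ) * k ≤ ((R.neighborFinset v).card : ℝ) := by
    intro v
    have : (R.neighborSet v).ncard = (R.neighborFinset v).card := by
      rw [SimpleGraph.neighborFinset_def, Set.ncard_eq_toFinset_card']
    rw [← this]; exact hdeg v
  -- each non-neighbourhood is small
  have hB : ∀ v : Fin k, ((Finset.univ \ R.neighborFinset v).card : ℝ) ≤ (1/(r:ℝ) - μ) * k := by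
    intro v
    have hc : (Finset.univ \ R.neighborFinset v).card
        = k - (R.neighborFinset v).card := by
      rw [Finset.card_sdiff_of_subset (Finset.subset_univ _), Finset.card_univ, Fintype.card_fin]
    have hle : (R.neighborFinset v).card ≤ k := by
      calc (R.neighborFinset v).card ≤ Finset.univ.card := Finset.card_le_card (Finset.subset_univ _)
      _ = k := by rw [Finset.card_univ, Fintype.card_fin]
    have : ((Finset.univ \ R.neighborFinset v).card : ℝ)
        = (k : ℝ) - ((R.neighborFinset v).card : ℝ) := by
      rw [hc]; push_cast [Nat.cast_sub hle]; ring
    rw [this]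
    have := hdeg' v
    nlinarith [this]
  have hBpos : 0 ≤ (1/(r:ℝ) - μ) * k := by
    obtain ⟨v⟩ : Nonempty (Fin k) := ⟨⟨0, hk0⟩⟩
    have h1 := hB v
    have h2 : (0:ℝ) ≤ ((Finset.univ \ R.neighborFinset v).card : ℝ) := by positivity
    linarith
  set bad := A.biUnion (fun a => Finset.univ \ R.neighborFinset a) with hbad
  have hbadcard : (bad.card : ℝ) ≤ (r : ℝ) * ((1/(r:ℝ) - μ) * k) := by
    have h1 : bad.card ≤ ∑ a ∈ A, (Finset.univ \ R.neighborFinset a).card :=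
      Finset.card_biUnion_le
    have h2 : ((∑ a ∈ A, (Finset.univ \ R.neighborFinset a).card : ℕ) : ℝ)
        ≤ ∑ a ∈ A, (1/(r:ℝ) - μ) * k := by
      push_cast
      exact Finset.sum_le_sum (fun a _ => hB a)
    have h3 : ∑ a ∈ A, (1/(r:ℝ) - μ) * k = (A.card : ℝ) * ((1/(r:ℝ) - μ) * k) := by
      rw [Finset.sum_const, nsmul_eq_mul]
    have h4 : (A.card : ℝ) * ((1/(r:ℝ) - μ) * k) ≤ (r : ℝ) * ((1/(r:ℝ) - μ) * k) := by
      apply mul_le_mul_of_nonneg_right _ hBpos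
      exact_mod_cast hA
    calc (bad.card : ℝ) ≤ ((∑ a ∈ A, (Finset.univ \ R.neighborFinset a).card : ℕ) : ℝ) := by
          exact_mod_cast h1
      _ ≤ _ := h2
      _ = _ := h3
      _ ≤ _ := h4
  have hrne : (r : ℝ) ≠ 0 := by positivity
  have hkey : (bad.card : ℝ) + (F.card : ℝ) + 1 ≤ (k : ℝ) := by
    have : (r : ℝ) * ((1/(r:ℝ) - μ) * k) = (k : ℝ) - (r : ℝ) * μ * k := by
      field_simp
    rw [this] at hbadcard
    linarith
  have hnat : bad.card + F.card < k := by
    by_contra hcon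
    push_neg at hcon
    have hcon' : (k : ℝ) ≤ (bad.card : ℝ) + (F.card : ℝ) := by exact_mod_cast hcon
    linarith
  -- find v outside bad ∪ F
  have hcard : (bad ∪ F).card < k := lt_of_le_of_lt (Finset.card_union_le _ _) hnat
  have : (bad ∪ F) ≠ Finset.univ := by
    intro h
    rw [h, Finset.card_univ, Fintype.card_fin] at hcard
    omega
  obtain ⟨v, hv⟩ : ∃ v : Fin k, v ∉ bad ∪ F := by
    by_contra hcon
    push_neg at hcon
    exact this (Finset.eq_univ_of_forall hcon)
  rw [Finset.mem_union] at hv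
  push_neg at hv
  refine ⟨v, hv.2, ?_⟩
  intro a ha
  have : v ∉ Finset.univ \ R.neighborFinset a := by
    intro hmem
    exact hv.1 (Finset.mem_biUnion.2 ⟨a, ha, hmem⟩)
  rw [Finset.mem_sdiff] at this
  push_neg at this
  have := this (Finset.mem_univ v)
  rwa [SimpleGraph.mem_neighborFinset] at this


theorem pairs_fact (hP : Pairs r R S ℓ D) {i j : ℕ} (h1 : i < j) (h2 : j < ℓ)
    (h3 : j ≤ i + r) (h4 : i ∉ D) : S i ≠ S j ∧ R.Adj (S i) (S j) := by
  rcases hP h1 h2 h3 with h | h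
  · exact absurd h.1 h4
  · exact h

/-- The loop state: walk built so far, interface data. `c` is the periodic cycle
function, the last `r+1` entries are `c p, c (p+1), ...` (newest first). -/
structure LoopSt (r : ℕ) (R : SimpleGraph V) (x : ℕ → V) (S : ℕ → V) (ℓ : ℕ)
    (D : Set ℕ) (c : ℕ → V) (p g : ℕ) : Prop where
  pairs : Pairs r R S ℓ D
  hx : ∀ m, m < r → S m = x m
  hD : ∀ d ∈ D, r ≤ d ∧ d + 1 < ℓ ∧ S d = S (d + 1)
  hDr : r ∈ D
  hsp : ∀ d ∈ D, ∀ e ∈ D, d < e → d + 20 * (r + 1) ≤ e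
  hgap : ∀ d ∈ D, d + g ≤ ℓ
  hg2 : r + 2 ≤ g
  hper : ∀ n, c (n + (r + 1)) = c n
  hrec : ∀ q, q ≤ r → S (ℓ - 1 - q) = c (p + q)
  hlen : r + 1 ≤ ℓ

theorem per_add (hper : ∀ n, c (n + (r + 1)) = c n) :
    ∀ m n, c (n + m * (r + 1)) = c n := by
  intro m
  induction m with
  | zero => simp
  | succ m ih =>
    intro n
    have : n + (m + 1) * (r + 1) = (n + m * (r + 1)) + (r + 1) := by ring
    rw [this, hper, ih]

theorem per_mod (hper : ∀ n, c (n + (r + 1)) = c n) (n : ℕ) :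
    c n = c (n % (r + 1)) := by
  conv_lhs => rw [show n = n % (r + 1) + (n / (r + 1)) * (r + 1) by
    rw [Nat.mod_add_div']]
  rw [per_add hper]

/-- distinctness and adjacency facts for the current window -/
theorem LoopSt.cfacts {x : ℕ → V} (L : LoopSt r R x S ℓ D c p g) :
    ∀ i j, i ≤ r → j ≤ r → i ≠ j →
      c (p + i) ≠ c (p + j) ∧ R.Adj (c (p + i)) (c (p + j)) := by
  have key : ∀ i j, i ≤ r → j ≤ r → i < j →
      c (p + i) ≠ c (p + j) ∧ R.Adj (c (p + i)) (c (p + j)) := by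
    intro i j hi hj hij
    have hDj : (ℓ - 1 - j) ∉ D := by
      intro hd
      have := L.hgap _ hd
      have := L.hg2
      have := L.hlen
      omega
    have h := pairs_fact L.pairs (i := ℓ - 1 - j) (j := ℓ - 1 - i)
      (by have := L.hlen; omega) (by have := L.hlen; omega)
      (by have := L.hlen; omega) hDj
    rw [L.hrec i hi, L.hrec j hj] at h
    exact ⟨h.1.symm, h.2.symm⟩
  intro i j hi hj hij
  rcases Nat.lt_or_ge i j with h | h
  · exact key i j hi hj h
  · have := key j i hj hi (by omega)
    exact ⟨this.1.symm, this.2.symm⟩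

theorem append_recent (hP : Pairs r R S ℓ D) (hℓ : 1 ≤ ℓ) {ρ : ℕ → V}
    (hρ : ∀ q, q ≤ r → S (ℓ - 1 - q) = ρ q) (v : V)
    (hv : ∀ q, q < r → ρ q ≠ v ∧ R.Adj (ρ q) v) :
    Pairs r R (Function.update S ℓ v) (ℓ + 1) D ∧
    (∀ q, q ≤ r → Function.update S ℓ v (ℓ + 1 - 1 - q)
      = if q = 0 then v else ρ (q - 1)) ∧
    (∀ m, m < ℓ → Function.update S ℓ v m = S m) := by
  refine ⟨?_, ?_, ?_⟩
  · intro i j h1 h2 h3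
    rcases Nat.lt_or_ge j ℓ with hj | hj
    · have e1 : Function.update S ℓ v i = S i := Function.update_of_ne (by omega) _ _
      have e2 : Function.update S ℓ v j = S j := Function.update_of_ne (by omega) _ _
      rw [e1, e2]; exact hP h1 hj h3
    · have hjℓ : j = ℓ := by omega
      have hi : i < ℓ := by omega
      have e1 : Function.update S ℓ v i = S i := Function.update_of_ne (by omega) _ _
      have e2 : Function.update S ℓ v j = v := by
        rw [hjℓ]; exact Function.update_self _ _ _
      rw [e1, e2]
      have hq : i = ℓ - 1 - (ℓ - 1 - i) := by omega
      have hqr : ℓ - 1 - i < r := by omega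
      have := hv (ℓ - 1 - i) hqr
      rw [← hρ (ℓ - 1 - i) (by omega), ← hq] at this
      exact Or.inr this
  · intro q hq
    rcases Nat.eq_zero_or_pos q with h0 | h0
    · subst h0
      simpa using Function.update_self _ _ _
    · have h1 : ℓ + 1 - 1 - q = ℓ - 1 - (q - 1) := by omega
      have h2 : ℓ - 1 - (q - 1) ≠ ℓ := by omega
      rw [h1, Function.update_of_ne h2, hρ (q - 1) (by omega), if_neg (by omega)]
  · intro m hm
    exact Function.update_of_ne (by omega) _ _

/-- One idling step around the current cycle. -/
theorem idle_step {x : ℕ → V} (L : LoopSt r R x S ℓ D c p g) :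
    ∃ S', LoopSt r R x S' (ℓ + 1) D c (p + r) (g + 1) ∧
      ∀ m, m < ℓ → S' m = S m := by
  have cf := L.cfacts
  obtain ⟨hP, hrec', hpres⟩ := append_recent L.pairs (by have := L.hlen; omega) L.hrec (c (p + r))
    (fun q hq => ⟨(cf q r (by omega) le_rfl (by omega)).1,
      (cf q r (by omega) le_rfl (by omega)).2⟩)
  refine ⟨_, ⟨hP, ?_, ?_, L.hDr, L.hsp, ?_, by have := L.hg2; omega, L.hper, ?_,
      by have := L.hlen; omega⟩, hpres⟩
  · intro m hm
    rw [hpres m (by have := L.hlen; omega)]; exact L.hx m hm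
  · intro d hd
    obtain ⟨h1, h2, h3⟩ := L.hD d hd
    have hg := L.hgap d hd
    have hg2 := L.hg2
    refine ⟨h1, by omega, ?_⟩
    rw [hpres d (by omega), hpres (d+1) (by omega)]
    exact h3
  · intro d hd
    have := L.hgap d hd; omega
  · intro q hq
    rcases Nat.eq_zero_or_pos q with h0 | h0
    · subst h0
      have := hrec' 0 (by omega)
      simpa using this
    · have h1 := hrec' q hq
      rw [if_neg (by omega)] at h1
      rw [h1]
      have : p + r + q = (p + (q - 1)) + (r + 1) := by omega
      rw [this, L.hper]

theorem idle_many {x : ℕ → V} (L : LoopSt r R x S ℓ D c p g) (n : ℕ) :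
    ∃ S', LoopSt r R x S' (ℓ + n) D c (p + n * r) (g + n) ∧
      ∀ m, m < ℓ → S' m = S m := by
  induction n with
  | zero => exact ⟨S, by simpa using L, fun m _ => rfl⟩
  | succ n ih =>
    obtain ⟨S', L', hpres⟩ := ih
    obtain ⟨S'', L'', hpres'⟩ := idle_step L'
    refine ⟨S'', ?_, ?_⟩
    · have e1 : ℓ + (n + 1) = ℓ + n + 1 := by ring
      have e2 : p + (n + 1) * r = p + n * r + r := by ring
      have e3 : g + (n + 1) = g + n + 1 := by ring
      rw [e1, e2, e3]; exact L''
    · intro m hm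
      rw [hpres' m (by omega), hpres m hm]

/-- choose an idling count `n ∈ [A, A + r]` achieving a prescribed phase -/
theorem exists_shift (hr : 1 ≤ r) (p t A : ℕ) :
    ∃ n, A ≤ n ∧ n ≤ A + r ∧ (p + n * r) % (r + 1) = t % (r + 1) := by
  set m := ((p % (r + 1)) + (r + 1) - (t + A) % (r + 1)) % (r + 1) with hm
  refine ⟨A + m, by omega, ?_, ?_⟩
  · have : m < r + 1 := Nat.mod_lt _ (by omega)
    omega
  · set n := A + m with hn
    set a := (t + A) % (r + 1) with ha
    set b := p % (r + 1) with hb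
    have ha1 : a < r + 1 := Nat.mod_lt _ (by omega)
    have key : Nat.ModEq (r + 1) (t + n) p := by
      have h1 : Nat.ModEq (r + 1) (t + n) (a + m) := by
        have : t + n = (t + A) + m := by omega
        rw [this]
        exact Nat.ModEq.add_right m ((Nat.mod_modEq (t + A) (r + 1)).symm)
      have h2 : Nat.ModEq (r + 1) (a + m) (a + (b + (r + 1) - a)) :=
        Nat.ModEq.add_left a (Nat.mod_modEq _ _)
      have h3 : a + (b + (r + 1) - a) = b + (r + 1) := by omega
      have h4 : Nat.ModEq (r + 1) (b + (r + 1)) p := by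
        have h4a : Nat.ModEq (r + 1) (b + (r + 1)) b := by
          exact Nat.add_modEq_right
        exact h4a.trans (Nat.mod_modEq p (r + 1))
      rw [h3] at h2
      exact h1.trans (h2.trans h4)
    have h5 : Nat.ModEq (r + 1) (p + n * r + n) (t + n) := by
      have e : p + n * r + n = p + n * (r + 1) := by ring
      have h6 : Nat.ModEq (r + 1) (p + n * (r + 1)) p := by
        simpa using (Nat.ModEq.add_left p (Nat.modEq_zero_iff_dvd.2 ⟨n, by ring⟩))
      rw [e]
      exact h6.trans key.symm
    exact Nat.ModEq.add_right_cancel' n h5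


theorem card_image_dup {f : ℕ → V} {m n : ℕ} (h1 : n + 1 < m) (hf : f n = f (n + 1)) :
    ((Finset.range m).image f).card ≤ m - 1 := by
  have hsub : (Finset.range m).image f ⊆ ((Finset.range m).erase (n + 1)).image f := by
    intro u hu
    simp only [Finset.mem_image, Finset.mem_range, Finset.mem_erase] at hu ⊢
    obtain ⟨j, hj, rfl⟩ := hu
    by_cases hje : j = n + 1
    · exact ⟨n, ⟨by omega, by omega⟩, by rw [hje, ← hf]⟩
    · exact ⟨j, ⟨hje, hj⟩, rfl⟩
  calc ((Finset.range m).image f).card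
      ≤ (((Finset.range m).erase (n + 1)).image f).card := Finset.card_le_card hsub
    _ ≤ ((Finset.range m).erase (n + 1)).card := Finset.card_image_le
    _ = m - 1 := by
        rw [Finset.card_erase_of_mem (by simp; omega), Finset.card_range]

/-- The discounted fresh-append phase: after a lazy repetition (`ρ 0 = ρ 1`),
append `N ≤ r - 1` fresh vertices, all adjacent to the target `b`. -/
theorem gphase (hr : 1 ≤ r)
    (hP : Pairs r R S ℓ D) (hℓ : r + 1 ≤ ℓ)
    {ρ : ℕ → V} (hρ : ∀ q, q ≤ r → S (ℓ - 1 - q) = ρ q) (hdup : ρ 0 = ρ 1)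
    (b : V) (F : Finset V)
    (hch : ∀ A : Finset V, A.card ≤ r → ∃ v, v ∉ F ∧ ∀ a ∈ A, R.Adj a v)
    (N : ℕ) (hN : N ≤ r - 1) :
    ∃ (S' : ℕ → V) (G : ℕ → V),
      Pairs r R S' (ℓ + N) D ∧
      (∀ m, m < ℓ → S' m = S m) ∧
      (∀ q, q ≤ r → S' (ℓ + N - 1 - q) = if q < N then G (N - q) else ρ (q - N)) ∧
      (∀ i, 1 ≤ i → i ≤ N → R.Adj (G i) b ∧ G i ∉ F) ∧
      (∀ i j, 1 ≤ i → i < j → j ≤ N → (G i ≠ G j ∧ R.Adj (G i) (G j))) ∧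
      (∀ i j, 1 ≤ i → i ≤ N → j ≤ r - i → (ρ j ≠ G i ∧ R.Adj (ρ j) (G i))) := by
  induction N with
  | zero =>
    refine ⟨S, fun _ => b, by simpa using hP, fun m _ => rfl, ?_, ?_, ?_, ?_⟩
    · intro q hq
      simp only [Nat.add_zero, Nat.not_lt_zero, if_false, Nat.sub_zero]
      exact hρ q hq
    · intro i h1 h2; omega
    · intro i j h1 h2 h3; omega
    · intro i j h1 h2 h3; omega
  | succ n ih =>
    obtain ⟨S₁, G, hP₁, hpres₁, hrec₁, hGb, hGG, hGρ⟩ := ih (by omega)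
    set A : Finset V :=
      ((Finset.range r).image (fun q => S₁ (ℓ + n - 1 - q))) ∪ {b} with hA
    have hcardA : A.card ≤ r := by
      have hdup' : (fun q => S₁ (ℓ + n - 1 - q)) n = (fun q => S₁ (ℓ + n - 1 - q)) (n + 1) := by
        simp only
        rw [hrec₁ n (by omega), hrec₁ (n + 1) (by omega)]
        rw [if_neg (by omega), if_neg (by omega)]
        simpa using hdup
      have h1 := card_image_dup (f := fun q => S₁ (ℓ + n - 1 - q)) (n := n) (m := r)
        (by omega) hdup'
      calc A.card ≤ _ + ({b} : Finset V).card := Finset.card_union_le _ _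
        _ ≤ (r - 1) + 1 := by
            simp only [Finset.card_singleton]
            omega
        _ ≤ r := by omega
    obtain ⟨v, hvF, hvadj⟩ := hch A hcardA
    have hvb : R.Adj b v := hvadj b (by simp [hA])
    have hvrec : ∀ q, q < r → S₁ (ℓ + n - 1 - q) ≠ v ∧ R.Adj (S₁ (ℓ + n - 1 - q)) v := by
      intro q hq
      have hmem : S₁ (ℓ + n - 1 - q) ∈ A := by
        simp only [hA, Finset.mem_union, Finset.mem_image, Finset.mem_range]
        exact Or.inl ⟨q, hq, rfl⟩
      exact ⟨(hvadj _ hmem).ne, hvadj _ hmem⟩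
    obtain ⟨hP₂, hrec₂, hpres₂⟩ := append_recent
      (ρ := fun q => if q < n then G (n - q) else ρ (q - n)) hP₁ (by omega)
      (fun q hq => hrec₁ q hq) v
      (fun q hq => by
        simpa only [← hrec₁ q (by omega : q ≤ r)] using hvrec q hq)
    refine ⟨Function.update S₁ (ℓ + n) v, Function.update G (n + 1) v, ?_, ?_, ?_, ?_, ?_, ?_⟩
    · show Pairs r R _ (ℓ + (n + 1)) D
      have e : ℓ + (n + 1) = (ℓ + n) + 1 := by ring
      rw [e]; exact hP₂
    · intro m hm
      rw [hpres₂ m (by omega), hpres₁ m hm]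
    · intro q hq
      have e : ℓ + (n + 1) - 1 - q = (ℓ + n) + 1 - 1 - q := by omega
      rw [e, hrec₂ q hq]
      by_cases h0 : q = 0
      · subst h0
        simp
      · rw [if_neg h0]
        by_cases h1 : q - 1 < n
        · rw [if_pos h1, if_pos (by omega),
            Function.update_of_ne (show n + 1 - q ≠ n + 1 by omega)]
          congr 1
          omega
        · rw [if_neg h1, if_neg (by omega)]
          congr 1
          omega
    · intro i h1 h2
      by_cases hi : i = n + 1
      · subst hi
        rw [Function.update_self]
        exact ⟨hvb.symm, hvF⟩
      · rw [Function.update_of_ne hi]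
        exact hGb i h1 (by omega)
    · intro i j h1 h2 h3
      by_cases hj : j = n + 1
      · subst hj
        rw [Function.update_of_ne (show i ≠ n + 1 by omega), Function.update_self]
        have hi' : G i = S₁ (ℓ + n - 1 - (n - i)) := by
          rw [hrec₁ (n - i) (by omega), if_pos (by omega)]
          congr 1
          omega
        have hvv := hvrec (n - i) (by omega)
        rw [← hi'] at hvv
        exact hvv
      · rw [Function.update_of_ne (show i ≠ n + 1 by omega), Function.update_of_ne hj]
        exact hGG i j h1 h2 (by omega)
    · intro i j h1 h2 h3
      by_cases hi : i = n + 1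
      · subst hi
        rw [Function.update_self]
        have hj' : ρ j = S₁ (ℓ + n - 1 - (j + n)) := by
          rw [hrec₁ (j + n) (by omega), if_neg (by omega)]
          congr 1
          omega
        have hvv := hvrec (j + n) (by omega)
        rw [← hj'] at hvv
        exact hvv
      · rw [Function.update_of_ne hi]
        exact hGρ i j h1 (by omega) (by omega)


set_option maxHeartbeats 1000000 in
/-- The main stage: one lazy step, `r - tc` fresh vertices adjacent to `b`,
insertion of `b`, and re-appending of the `tc` protected vertices. -/
theorem stage {x : ℕ → V} (hr : 1 ≤ r)
    (L : LoopSt r R x S ℓ D c p g) (hg : 20 * (r + 1) + 2 ≤ g)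
    {tc : ℕ} (htc1 : 1 ≤ tc) (htcr : tc + 1 ≤ r)
    (b : V) (F : Finset V) (hbF : b ∈ F)
    (hTb : ∀ m, 1 ≤ m → m ≤ tc → R.Adj (c (p + (tc - m))) b ∧ c (p + (tc - m)) ≠ b)
    (hch : ∀ A : Finset V, A.card ≤ r → ∃ v, v ∉ F ∧ ∀ a ∈ A, R.Adj a v) :
    ∃ (S' : ℕ → V) (c' : ℕ → V),
      LoopSt r R x S' (ℓ + r + 3) (insert (ℓ - 1) D) c' 0 (r + 4) ∧
      (∀ q, 1 ≤ q → q ≤ tc → c' q = c (p + (q - 1))) ∧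
      c' (tc + 1) = b := by
  set gc := r - tc with hgc
  have cf := L.cfacts
  have hℓr := L.hlen
  -- Step 1 : lazy repetition
  have hP₁ := pairs_append_lazy L.pairs (by omega)
    (fun d hd => by have := L.hgap d hd; omega)
  set S₁ := Function.update S ℓ (S (ℓ - 1)) with hS₁
  set D₁ : Set ℕ := insert (ℓ - 1) D with hD₁
  set ρ₁ : ℕ → V := fun q => if q = 0 then c p else c (p + (q - 1)) with hρ₁
  have hrec₁ : ∀ q, q ≤ r → S₁ (ℓ + 1 - 1 - q) = ρ₁ q := by
    intro q hq
    rcases Nat.eq_zero_or_pos q with h0 | h0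
    · subst h0
      show S₁ ℓ = _
      rw [hS₁, Function.update_self]
      have := L.hrec 0 (by omega)
      simpa [hρ₁] using this
    · have e : ℓ + 1 - 1 - q = ℓ - 1 - (q - 1) := by omega
      rw [e, hS₁, Function.update_of_ne (by omega), L.hrec (q - 1) (by omega), hρ₁]
      simp [Nat.pos_iff_ne_zero.1 h0]
  have hpres₁ : ∀ m, m < ℓ → S₁ m = S m := fun m hm =>
    Function.update_of_ne (by omega) _ _
  -- Step 2 : the fresh vertices adjacent to b
  obtain ⟨S₂, G, hP₂, hpres₂, hrec₂, hGb, hGG, hGρ⟩ :=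
    gphase hr hP₁ (by omega) hrec₁ (by simp [hρ₁]) b F hch gc (by omega)
  -- Step 3 : append b itself
  have hbstep := append_recent (ρ := fun q => if q < gc then G (gc - q) else ρ₁ (q - gc))
    hP₂ (by omega) (fun q hq => hrec₂ q hq) b ?hvb
  case hvb =>
    intro q hq
    beta_reduce
    by_cases h1 : q < gc
    · rw [if_pos h1]
      have := hGb (gc - q) (by omega) (by omega)
      exact ⟨fun h => (by rw [h] at this; exact this.2 hbF), this.1⟩
    · rw [if_neg h1]
      have hj : q - gc ≤ tc - 1 := by omega
      rcases Nat.eq_zero_or_pos (q - gc) with h0 | h0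
      · rw [h0, hρ₁]
        simp only [if_pos rfl]
        have htt := hTb tc (by omega) le_rfl
        simp only [Nat.sub_self, Nat.add_zero] at htt
        exact ⟨htt.2, htt.1⟩
      · rw [hρ₁]
        simp only [if_neg (by omega : ¬ q - gc = 0)]
        have := hTb (tc - (q - gc - 1)) (by omega) (by omega)
        have e : tc - (tc - (q - gc - 1)) = q - gc - 1 := by omega
        rw [e] at this
        exact ⟨this.2, this.1⟩
  obtain ⟨hP₃, hrec₃, hpres₃⟩ := hbstep
  set S₃ := Function.update S₂ (ℓ + 1 + gc) b with hS₃
  -- the recent description after step 3, as a single function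
  set ψ : ℕ → ℕ → V := fun m q =>
    if q < m then c (p + (tc - (m - q)))
    else if q = m then b
    else if q ≤ m + gc then G (gc + m + 1 - q)
    else if q = m + gc + 1 then c p
    else c (p + (q - gc - m - 2)) with hψ
  have hrec₃' : ∀ q, q ≤ r → S₃ (ℓ + 1 + gc + 1 - 1 - q) = ψ 0 q := by
    intro q hq
    have := hrec₃ q hq
    rw [this, hψ]
    beta_reduce
    rcases Nat.eq_zero_or_pos q with h0 | h0
    · subst h0; simp
    · rw [if_neg (by omega : ¬ q = 0)]
      simp only [Nat.not_lt_zero, if_false, if_neg (by omega : ¬ q = 0)]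
      by_cases h1 : q - 1 < gc
      · rw [if_pos h1, if_pos (by omega : q ≤ 0 + gc)]
        congr 1; omega
      · rw [if_neg h1, hρ₁]
        beta_reduce
        by_cases h2 : q - 1 - gc = 0
        · rw [if_pos h2, if_neg (by omega : ¬ q ≤ 0 + gc), if_pos (by omega : q = 0 + gc + 1)]
        · rw [if_neg h2, if_neg (by omega : ¬ q ≤ 0 + gc),
            if_neg (by omega : ¬ q = 0 + gc + 1)]
          congr 1; omega
  -- Step 4 : re-append the protected vertices
  have tphase : ∀ m, m ≤ tc → ∃ S₄ : ℕ → V,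
      Pairs r R S₄ (ℓ + gc + 2 + m) D₁ ∧
      (∀ u, u < ℓ + gc + 2 → S₄ u = S₃ u) ∧
      (∀ q, q ≤ r → S₄ (ℓ + gc + 2 + m - 1 - q) = ψ m q) := by
    intro m
    induction m with
    | zero =>
      intro _
      refine ⟨S₃, by have e : ℓ + gc + 2 = ℓ + 1 + gc + 1 := by ring
                     rw [e]; exact hP₃, fun u _ => rfl, ?_⟩
      intro q hq
      have e : ℓ + gc + 2 + 0 - 1 - q = ℓ + 1 + gc + 1 - 1 - q := by omega
      rw [e]; exact hrec₃' q hq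
    | succ m ih =>
      intro hm
      obtain ⟨S₄, hP₄, hpres₄, hrec₄⟩ := ih (by omega)
      have happ := append_recent (ρ := ψ m) hP₄ (by omega) hrec₄
        (c (p + (tc - (m + 1)))) ?hvt
      case hvt =>
        intro q hq
        rw [hψ]
        beta_reduce
        by_cases h1 : q < m
        · simp only [if_pos h1]
          exact cf (tc - (m - q)) (tc - (m + 1)) (by omega) (by omega) (by omega)
        · rw [if_neg h1]
          by_cases h2 : q = m
          · rw [if_pos h2]
            have := hTb (m + 1) (by omega) (by omega)
            exact ⟨this.2.symm, this.1.symm⟩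
          · rw [if_neg h2]
            by_cases h3 : q ≤ m + gc
            · rw [if_pos h3]
              have hi : 1 ≤ gc + m + 1 - q ∧ gc + m + 1 - q ≤ gc := by omega
              have hρv : c (p + (tc - (m + 1))) = ρ₁ (tc - m) := by
                rw [hρ₁]
                beta_reduce
                rw [if_neg (by omega)]
                exact congrArg (fun z => c (p + z)) (by omega)
              have := hGρ (gc + m + 1 - q) (tc - m) hi.1 hi.2 (by omega)
              rw [← hρv] at this
              exact ⟨this.1.symm, this.2.symm⟩
            · rw [if_neg h3]
              by_cases h4 : q = m + gc + 1
              · rw [if_pos h4]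
                have : (0 : ℕ) ≠ tc - (m + 1) := by omega
                have h5 := cf 0 (tc - (m + 1)) (by omega) (by omega) this
                simpa using h5
              · rw [if_neg h4]
                exact cf (q - gc - m - 2) (tc - (m + 1)) (by omega) (by omega) (by omega)
      obtain ⟨hP₅, hrec₅, hpres₅⟩ := happ
      refine ⟨Function.update S₄ (ℓ + gc + 2 + m) (c (p + (tc - (m + 1)))), ?_, ?_, ?_⟩
      · have e : ℓ + gc + 2 + (m + 1) = (ℓ + gc + 2 + m) + 1 := by ring
        rw [e]; exact hP₅
      · intro u hu
        rw [hpres₅ u (by omega), hpres₄ u hu]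
      · intro q hq
        have e : ℓ + gc + 2 + (m + 1) - 1 - q = (ℓ + gc + 2 + m) + 1 - 1 - q := by omega
        rw [e, hrec₅ q hq, hψ]
        beta_reduce
        rcases Nat.eq_zero_or_pos q with h0 | h0
        · subst h0
          rw [if_pos rfl]
          simp only [if_pos (by omega : (0:ℕ) < m + 1)]
          exact congrArg (fun z => c (p + (tc - z))) (by omega)
        · rw [if_neg (by omega)]
          by_cases h1 : q - 1 < m
          · rw [if_pos h1, if_pos (by omega : q < m + 1)]
            exact congrArg (fun z => c (p + (tc - z))) (by omega)
          · rw [if_neg h1]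
            by_cases h2 : q - 1 = m
            · rw [if_pos h2, if_neg (by omega : ¬ q < m + 1), if_pos (by omega : q = m + 1)]
            · rw [if_neg h2]
              by_cases h3 : q - 1 ≤ m + gc
              · rw [if_pos h3, if_neg (by omega : ¬ q < m + 1),
                  if_neg (by omega : ¬ q = m + 1), if_pos (by omega : q ≤ m + 1 + gc)]
                congr 1; omega
              · rw [if_neg h3]
                by_cases h4 : q - 1 = m + gc + 1
                · rw [if_pos h4, if_neg (by omega : ¬ q < m + 1),
                    if_neg (by omega : ¬ q = m + 1), if_neg (by omega : ¬ q ≤ m + 1 + gc),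
                    if_pos (by omega : q = m + 1 + gc + 1)]
                · rw [if_neg h4, if_neg (by omega : ¬ q < m + 1),
                    if_neg (by omega : ¬ q = m + 1), if_neg (by omega : ¬ q ≤ m + 1 + gc),
                    if_neg (by omega : ¬ q = m + 1 + gc + 1)]
                  congr 1; omega
  obtain ⟨S₄, hP₄, hpres₄, hrec₄⟩ := tphase tc le_rfl
  -- Step 5 : re-append G 1
  have happ5 := append_recent (ρ := ψ tc) hP₄ (by omega) hrec₄ (G 1) ?hv5
  case hv5 =>
    intro q hq
    rw [hψ]
    beta_reduce
    by_cases h1 : q < tc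
    · rw [if_pos h1]
      have hρv : c (p + (tc - (tc - q))) = ρ₁ (q + 1) := by
        rw [hρ₁]
        beta_reduce
        rw [if_neg (by omega)]
        exact congrArg (fun z => c (p + z)) (by omega)
      have := hGρ 1 (q + 1) le_rfl (by omega) (by omega)
      rw [← hρv] at this
      exact this
    · rw [if_neg h1]
      by_cases h2 : q = tc
      · rw [if_pos h2]
        have := hGb 1 le_rfl (by omega)
        exact ⟨fun h => this.2 (h ▸ hbF), this.1.symm⟩
      · rw [if_neg h2, if_pos (by omega : q ≤ tc + gc)]
        have := hGG 1 (gc + tc + 1 - q) le_rfl (by omega) (by omega)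
        exact ⟨this.1.symm, this.2.symm⟩
  obtain ⟨hP₅, hrec₅, hpres₅⟩ := happ5
  -- assemble the new loop state
  set c₀ : ℕ → V := fun q =>
    if q = 0 then G 1
    else if q ≤ tc then c (p + (q - 1))
    else if q = tc + 1 then b
    else G (r + 2 - q) with hc₀
  set c' : ℕ → V := fun n => c₀ (n % (r + 1)) with hc'
  have hc'eq : ∀ q, q ≤ r → c' q = c₀ q := by
    intro q hq
    rw [hc']
    beta_reduce
    rw [Nat.mod_eq_of_lt (by omega)]
  have hpresall : ∀ u, u < ℓ → S₄ u = S u := by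
    intro u hu
    rw [hpres₄ u (by omega), hpres₃ u (by omega), hpres₂ u (by omega), hpres₁ u hu]
  have hSℓ : S₄ ℓ = c p := by
    rw [hpres₄ ℓ (by omega), hpres₃ ℓ (by omega), hpres₂ ℓ (by omega)]
    rw [hS₁, Function.update_self]
    have := L.hrec 0 (by omega)
    simpa using this
  refine ⟨Function.update S₄ (ℓ + gc + 2 + tc) (G 1), c', ?_, ?_, ?_⟩
  · refine ⟨?_, ?_, ?_, ?_, ?_, ?_, by omega, ?_, ?_, by omega⟩
    · have e : ℓ + r + 3 = (ℓ + gc + 2 + tc) + 1 := by omega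
      rw [e]; exact hP₅
    · intro m hm
      rw [Function.update_of_ne (by omega), hpresall m (by omega)]
      exact L.hx m hm
    · intro d hd
      rw [hD₁] at hd
      rcases Set.mem_insert_iff.1 hd with h | h
      · subst h
        refine ⟨by omega, by omega, ?_⟩
        have e1 : Function.update S₄ (ℓ + gc + 2 + tc) (G 1) (ℓ - 1) = S (ℓ - 1) := by
          rw [Function.update_of_ne (by omega), hpresall (ℓ - 1) (by omega)]
        have e2 : Function.update S₄ (ℓ + gc + 2 + tc) (G 1) (ℓ - 1 + 1) = c p := by
          rw [Function.update_of_ne (by omega)]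
          have : ℓ - 1 + 1 = ℓ := by omega
          rw [this, hSℓ]
        rw [e1, e2]
        have := L.hrec 0 (by omega)
        simpa using this
      · obtain ⟨h1, h2, h3⟩ := L.hD d h
        have hgd := L.hgap d h
        refine ⟨h1, by omega, ?_⟩
        rw [Function.update_of_ne (by omega), Function.update_of_ne (by omega),
          hpresall d (by omega), hpresall (d + 1) (by omega)]
        exact h3
    · exact Set.mem_insert_iff.2 (Or.inr L.hDr)
    · intro d hd e he hde
      rcases Set.mem_insert_iff.1 hd with h | h
      · rcases Set.mem_insert_iff.1 he with h' | h'
        · omega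
        · have := L.hgap e h'; omega
      · rcases Set.mem_insert_iff.1 he with h' | h'
        · subst h'
          have := L.hgap d h
          omega
        · exact L.hsp d h e h' hde
    · intro d hd
      rcases Set.mem_insert_iff.1 hd with h | h
      · omega
      · have := L.hgap d h; omega
    · intro n
      rw [hc']
      beta_reduce
      rw [Nat.add_mod_right]
    · intro q hq
      have e : ℓ + r + 3 - 1 - q = (ℓ + gc + 2 + tc) + 1 - 1 - q := by omega
      rw [show (0 : ℕ) + q = q by omega, hc'eq q hq, e, hrec₅ q hq, hψ, hc₀]
      beta_reduce
      rcases Nat.eq_zero_or_pos q with h0 | h0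
      · subst h0
        rw [if_pos rfl, if_pos rfl]
      · rw [if_neg (by omega), if_neg (by omega : ¬ q = 0)]
        by_cases h1 : q - 1 < tc
        · rw [if_pos h1, if_pos (by omega : q ≤ tc)]
          congr 2; omega
        · rw [if_neg h1]
          by_cases h2 : q - 1 = tc
          · rw [if_pos h2, if_neg (by omega : ¬ q ≤ tc), if_pos (by omega : q = tc + 1)]
          · rw [if_neg h2, if_pos (by omega : q - 1 ≤ tc + gc),
              if_neg (by omega : ¬ q ≤ tc), if_neg (by omega : ¬ q = tc + 1)]
            congr 1; omega
  · intro q h1 h2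
    rw [hc'eq q (by omega), hc₀]
    beta_reduce
    rw [if_neg (by omega), if_pos h2]
  · rw [hc'eq (tc + 1) (by omega), hc₀]
    beta_reduce
    rw [if_neg (by omega), if_neg (by omega), if_pos rfl]


theorem per_at (hper : ∀ n, c (n + (r + 1)) = c n) {p t j : ℕ}
    (hp : p % (r + 1) = t % (r + 1)) :
    c (p + j) = c (t + j) := by
  rw [per_mod hper (p + j), per_mod hper (t + j)]
  congr 1
  exact Nat.ModEq.add_right j hp

/-- The initial gadget: head, one fresh vertex, the first lazy step at position r,
then r-1 fresh vertices adjacent to `b1`, and a loop extension. -/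
theorem init {x : ℕ → V} (hr2 : 2 ≤ r)
    (hx : ∀ i j, i < r → j < r → i ≠ j → x i ≠ x j ∧ R.Adj (x i) (x j))
    (b1 : V) (F : Finset V) (hb1F : b1 ∈ F)
    (hch : ∀ A : Finset V, A.card ≤ r → ∃ v, v ∉ F ∧ ∀ a ∈ A, R.Adj a v) :
    ∃ (S : ℕ → V) (c : ℕ → V),
      LoopSt r R x S (2 * r + 2) {r} c 0 (r + 2) ∧
      R.Adj (c 1) b1 ∧ c 1 ∉ F := by
  have P0 : Pairs r R x r ∅ := by
    intro i j h1 h2 h3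
    exact Or.inr ⟨(hx i j (by omega) h2 (by omega)).1, (hx i j (by omega) h2 (by omega)).2⟩
  -- append cs adjacent to the whole head
  obtain ⟨cs, hcsF, hcsadj⟩ := hch ((Finset.range r).image x)
    (le_trans Finset.card_image_le (by simp))
  obtain ⟨hP1, hrec1, hpres1⟩ := append_recent (ρ := fun q => x (r - 1 - q)) P0 (by omega)
    (fun q hq => rfl) cs
    (fun q hq => by
      have hmem : x (r - 1 - q) ∈ (Finset.range r).image x := by
        refine Finset.mem_image.2 ⟨r - 1 - q, Finset.mem_range.2 (by omega), rfl⟩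
      exact ⟨(hcsadj _ hmem).ne, hcsadj _ hmem⟩)
  set S1 := Function.update x r cs with hS1
  -- the lazy step at position r
  have hP2 := pairs_append_lazy hP1 (by omega) (by intro d hd; exact absurd hd (Set.notMem_empty d))
  rw [show r + 1 - 1 = r by omega] at hP2
  have hS1r : S1 r = cs := by
    have h := hrec1 0 (by omega)
    rw [show r + 1 - 1 - 0 = r by omega] at h
    simpa using h
  set S2 := Function.update S1 (r + 1) (S1 r) with hS2
  set ρ2 : ℕ → V := fun q => if q ≤ 1 then cs else x (r + 1 - q) with hρ2
  have hrec2 : ∀ q, q ≤ r → S2 (r + 2 - 1 - q) = ρ2 q := by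
    intro q hq
    rcases Nat.eq_zero_or_pos q with h0 | h0
    · subst h0
      rw [show r + 2 - 1 - 0 = r + 1 by omega, hS2, Function.update_self, hS1r, hρ2]
      simp
    · rw [show r + 2 - 1 - q = r + 1 - q by omega, hS2,
        Function.update_of_ne (by omega)]
      have h := hrec1 (q - 1) (by omega)
      rw [show r + 1 - 1 - (q - 1) = r + 1 - q by omega] at h
      rw [h, hρ2]
      beta_reduce
      by_cases h1 : q = 1
      · rw [if_pos (show q - 1 = 0 by omega), if_pos (show q ≤ 1 by omega)]
      · rw [if_neg (show ¬ q - 1 = 0 by omega), if_neg (show ¬ q ≤ 1 by omega)]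
        exact congrArg x (by omega)
  have hP2' : Pairs r R S2 (r + 2) {r} := by
    have e : insert r (∅ : Set ℕ) = {r} := by
      ext a; simp
    rw [show r + 1 + 1 = r + 2 by omega, e] at hP2
    exact hP2
  -- the r-1 fresh vertices adjacent to b1
  obtain ⟨S3, G, hP3, hpres3, hrec3, hGb, hGG, hGρ⟩ :=
    gphase (by omega) hP2' (by omega) hrec2 (by simp [hρ2]) b1 F hch (r - 1) le_rfl
  rw [show r + 2 + (r - 1) = 2 * r + 1 by omega] at hP3 hrec3
  -- the loop extension e
  obtain ⟨ev, hevF, hevadj⟩ := hch ((Finset.range r).image (fun q => S3 (2 * r + 1 - 1 - q)))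
    (le_trans Finset.card_image_le (by simp))
  obtain ⟨hP4, hrec4, hpres4⟩ := append_recent
    (ρ := fun q => if q < r - 1 then G (r - 1 - q) else ρ2 (q - (r - 1)))
    hP3 (by omega) (fun q hq => hrec3 q hq) ev
    (fun q hq => by
      have hmem : S3 (2 * r + 1 - 1 - q) ∈
          (Finset.range r).image (fun q => S3 (2 * r + 1 - 1 - q)) := by
        refine Finset.mem_image.2 ⟨q, Finset.mem_range.2 hq, rfl⟩
      have h2 := hevadj _ hmem
      simpa only [← hrec3 q (by omega : q ≤ r)] using ⟨h2.ne, h2⟩)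
  set c₀ : ℕ → V := fun q => if q = 0 then ev else if q ≤ r - 1 then G (r - q) else cs
    with hc₀
  set c : ℕ → V := fun n => c₀ (n % (r + 1)) with hc
  have hcper : ∀ n, c (n + (r + 1)) = c n := by
    intro n
    rw [hc]
    beta_reduce
    rw [Nat.add_mod_right]
  have hceq : ∀ q, q ≤ r → c q = c₀ q := by
    intro q hq
    rw [hc]
    beta_reduce
    rw [Nat.mod_eq_of_lt (by omega)]
  have hpresS4 : ∀ m, m < r → Function.update S3 (2 * r + 1) ev m = x m := by
    intro m hm
    rw [Function.update_of_ne (by omega), hpres3 m (by omega), hS2,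
      Function.update_of_ne (by omega), hS1, Function.update_of_ne (by omega)]
  have hS4r : Function.update S3 (2 * r + 1) ev r = cs := by
    rw [Function.update_of_ne (by omega), hpres3 r (by omega), hS2,
      Function.update_of_ne (by omega), hS1r]
  have hS4r1 : Function.update S3 (2 * r + 1) ev (r + 1) = cs := by
    rw [Function.update_of_ne (by omega), hpres3 (r + 1) (by omega), hS2,
      Function.update_self, hS1r]
  refine ⟨Function.update S3 (2 * r + 1) ev, c, ⟨?_, hpresS4, ?_, rfl, ?_, ?_, by omega,
      hcper, ?_, by omega⟩, ?_, ?_⟩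
  · rw [show 2 * r + 2 = 2 * r + 1 + 1 by omega]
    exact hP4
  · intro d hd
    rw [Set.mem_singleton_iff] at hd
    subst hd
    refine ⟨le_rfl, by omega, ?_⟩
    rw [hS4r, hS4r1]
  · intro d hd e he hde
    rw [Set.mem_singleton_iff] at hd he
    omega
  · intro d hd
    rw [Set.mem_singleton_iff] at hd
    omega
  · intro q hq
    have h := hrec4 q hq
    rw [show 2 * r + 1 + 1 - 1 - q = 2 * r + 2 - 1 - q by omega] at h
    rw [h, show (0 : ℕ) + q = q by omega, hceq q hq, hc₀]
    beta_reduce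
    rcases Nat.eq_zero_or_pos q with h0 | h0
    · subst h0
      rw [if_pos rfl, if_pos rfl]
    · rw [if_neg (show ¬ q = 0 by omega), if_neg (show ¬ q = 0 by omega)]
      by_cases h1 : q - 1 < r - 1
      · rw [if_pos h1, if_pos (show q ≤ r - 1 by omega)]
        exact congrArg G (by omega)
      · rw [if_neg h1, if_neg (show ¬ q ≤ r - 1 by omega), hρ2]
        beta_reduce
        rw [if_pos (show q - 1 - (r - 1) ≤ 1 by omega)]
  · rw [hceq 1 (by omega), hc₀]
    beta_reduce
    rw [if_neg (by omega), if_pos (by omega)]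
    exact (hGb (r - 1) (by omega) le_rfl).1
  · rw [hceq 1 (by omega), hc₀]
    beta_reduce
    rw [if_neg (by omega), if_pos (by omega)]
    exact (hGb (r - 1) (by omega) le_rfl).2


/-- One morph step: idle to the right phase, then run a stage. -/
theorem step {x : ℕ → V} (hr2 : 2 ≤ r)
    (L : LoopSt r R x S ℓ D c 0 g)
    {tc t : ℕ} (htc1 : 1 ≤ tc) (htcr : tc + 1 ≤ r) (htr : t ≤ r)
    (b : V) (F : Finset V) (hbF : b ∈ F)
    (hTb : ∀ j, j ≤ tc - 1 → R.Adj (c (t + j)) b ∧ c (t + j) ≠ b)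
    (hch : ∀ A : Finset V, A.card ≤ r → ∃ v, v ∉ F ∧ ∀ a ∈ A, R.Adj a v) :
    ∃ (S' : ℕ → V) (ℓ' : ℕ) (D' : Set ℕ) (c' : ℕ → V),
      LoopSt r R x S' ℓ' D' c' 0 (r + 4) ∧
      (∀ q, 1 ≤ q → q ≤ tc → c' q = c (t + (q - 1))) ∧
      c' (tc + 1) = b ∧ ℓ ≤ ℓ' ∧ ℓ' ≤ ℓ + 23 * (r + 1) := by
  obtain ⟨n, hn1, hn2, hn3⟩ := exists_shift (r := r) (by omega) 0 t (20 * (r + 1))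
  obtain ⟨S1, L1, _⟩ := idle_many L n
  have hshift : ∀ j : ℕ, c (0 + n * r + j) = c (t + j) := fun j => per_at L.hper hn3
  obtain ⟨S', c', L', hc1, hc2⟩ := stage (by omega) L1
    (by have := L.hg2; omega) htc1 htcr b F hbF
    (fun m hm1 hm2 => by
      rw [hshift (tc - m)]
      exact hTb (tc - m) (by omega)) hch
  refine ⟨S', (ℓ + n) + r + 3, _, c', L', ?_, hc2, by omega, by omega⟩
  intro q h1 h2
  rw [hc1 q h1 h2, hshift (q - 1)]

/-- The full forward construction. -/
theorem buildup {x : ℕ → V} (hr2 : 2 ≤ r)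
    (hx : ∀ i j, i < r → j < r → i ≠ j → x i ≠ x j ∧ R.Adj (x i) (x j))
    (bf : ℕ → V) (F : Finset V)
    (hbF : ∀ s, 1 ≤ s → s ≤ r → bf s ∈ F)
    (hbadj : ∀ s t, 1 ≤ s → s ≤ r → 1 ≤ t → t ≤ r → s ≠ t → R.Adj (bf s) (bf t))
    (hch : ∀ A : Finset V, A.card ≤ r → ∃ v, v ∉ F ∧ ∀ a ∈ A, R.Adj a v) :
    ∃ (S : ℕ → V) (ℓ : ℕ) (D : Set ℕ) (c : ℕ → V) (p g : ℕ),
      LoopSt r R x S ℓ D c p g ∧ 20 * (r + 1) + 1 ≤ g ∧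
      (∀ q, q ≤ r - 1 → c (p + q) = bf (q + 1)) ∧
      2 * r + 2 ≤ ℓ ∧ ℓ ≤ 2 * r + 2 + (r + 1) * (23 * (r + 1)) + 21 * (r + 1) := by
  obtain ⟨S0, c0, L0, hpiv1, hpiv2⟩ := init hr2 hx (bf 1) F (hbF 1 (by omega) (by omega)) hch
  -- stage 1 : insert bf 1 next to the pivot
  obtain ⟨S1, ℓ1, D1, c1, L1, hc11, hc12, hlow1, hb1⟩ := step hr2 L0 (tc := 1) (t := 1)
    (by omega) (by omega) (by omega) (bf 1) F (hbF 1 (by omega) (by omega))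
    (fun j hj => by
      have : j = 0 := by omega
      subst this
      exact ⟨hpiv1, fun h => hpiv2 (h ▸ hbF 1 (by omega) (by omega))⟩) hch
  -- stage 2 : insert bf 2 next to bf 1
  obtain ⟨S2, ℓ2, D2, c2, L2, hc21, hc22, hlow2, hb2⟩ := step hr2 L1 (tc := 1) (t := 2)
    (by omega) (by omega) (by omega) (bf 2) F (hbF 2 (by omega) (by omega))
    (fun j hj => by
      have : j = 0 := by omega
      subst this
      have e : c1 (2 + 0) = bf 1 := by
        rw [show (2 : ℕ) + 0 = 1 + 1 by omega, hc12]
      rw [e]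
      exact ⟨hbadj 1 2 (by omega) (by omega) (by omega) (by omega) (by omega),
        (hbadj 1 2 (by omega) (by omega) (by omega) (by omega) (by omega)).ne⟩) hch
  have hinv2 : ∀ q, 1 ≤ q → q ≤ 2 → c2 q = bf q := by
    intro q h1 h2
    interval_cases q
    · rw [hc21 1 (by omega) (by omega), show (2:ℕ) + (1 - 1) = 1 + 1 by omega, hc12]
    · exact hc22
  -- the remaining stages
  have IND : ∀ n, n + 2 ≤ r → ∃ (S : ℕ → V) (ℓ : ℕ) (D : Set ℕ) (c : ℕ → V),
      LoopSt r R x S ℓ D c 0 (r + 4) ∧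
      (∀ q, 1 ≤ q → q ≤ n + 2 → c q = bf q) ∧
      2 * r + 2 ≤ ℓ ∧ ℓ ≤ 2 * r + 2 + (n + 3) * (23 * (r + 1)) := by
    intro n
    induction n with
    | zero =>
      intro _
      refine ⟨S2, ℓ2, D2, c2, L2, hinv2, by omega, ?_⟩
      rw [show (0 + 3) * (23 * (r + 1)) = 69 * r + 69 by ring]
      omega
    | succ n ih =>
      intro hn
      obtain ⟨S3, ℓ3, D3, c3, L3, hc3, hl3a, hl3b⟩ := ih (by omega)
      obtain ⟨S4, ℓ4, D4, c4, L4, hc41, hc42, hlow4, hb4⟩ := step hr2 L3 (tc := n + 2) (t := 1)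
        (by omega) (by omega) (by omega) (bf (n + 3)) F (hbF (n + 3) (by omega) (by omega))
        (fun j hj => by
          rw [hc3 (1 + j) (by omega) (by omega)]
          exact ⟨hbadj (1 + j) (n + 3) (by omega) (by omega) (by omega) (by omega) (by omega),
            (hbadj (1 + j) (n + 3) (by omega) (by omega) (by omega) (by omega) (by omega)).ne⟩)
        hch
      refine ⟨S4, ℓ4, D4, c4, L4, ?_, by omega, ?_⟩
      swap
      · rw [show (n + 1 + 3) * (23 * (r + 1)) = (n + 3) * (23 * (r + 1)) + (23 * r + 23)
          by ring]
        linarith [hl3b, hb4]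
      intro q h1 h2
      rcases Nat.lt_or_ge q (n + 3) with h3 | h3
      · rw [hc41 q h1 (by omega), show 1 + (q - 1) = q by omega]
        exact hc3 q h1 (by omega)
      · have : q = n + 3 := by omega
        subst this
        exact hc42
  obtain ⟨S5, ℓ5, D5, c5, L5, hc5, hl5a, hl5b⟩ := IND (r - 2) (by omega)
  -- final idle to the exit phase
  obtain ⟨n, hn1, hn2, hn3⟩ := exists_shift (r := r) (by omega) 0 1 (20 * (r + 1))
  obtain ⟨S6, L6, _⟩ := idle_many L5 n
  rw [show (r - 2) + 3 = r + 1 by omega] at hl5b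
  refine ⟨S6, ℓ5 + n, D5, c5, 0 + n * r, r + 4 + n, L6, by omega, ?_, by omega,
    by linarith [hl5b, hn2]⟩
  intro q hq
  have e := per_at (p := 0 + n * r) (t := 1) (j := q) L5.hper hn3
  rw [e, show 1 + q = q + 1 by omega]
  exact hc5 (q + 1) (by omega) (by omega)


end WkAux

theorem stmt13 (μ : ℝ) (hμ : 0 < μ) (r : ℕ) (hr : 2 ≤ r) :
    ∃ k₀ : ℕ, ∀ k : ℕ, k₀ ≤ k → ∀ R : SimpleGraph (Fin k),
      (∀ v : Fin k, (1 - 1 / (r : ℝ) + μ) * k ≤ ((R.neighborSet v).ncard : ℝ)) →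
      ∀ x y : Fin r → Fin k, Function.Injective x → Function.Injective y →
        Disjoint (Set.range x) (Set.range y) →
        (∀ i j, i ≠ j → R.Adj (x i) (x j)) → (∀ i j, i ≠ j → R.Adj (y i) (y j)) →
        ∃ ℓ : ℕ, 2 * r ≤ ℓ ∧ ℓ ≤ 100 * r ^ 5 ∧ ∃ S : ℕ → Fin k,
          IsGoodWalk r R S ℓ ∧
          (∀ j : Fin r, S j.val = x j) ∧
          (∀ j : Fin r, S (ℓ - r + j.val) = y j) ∧
          ∀ q, Lazy S ℓ q → q + 20 * (r + 1) < ℓ := by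
  classical
  refine ⟨⌈((r : ℝ) + 2) / μ⌉₊ + 1, ?_⟩
  intro k hk R hdeg x y hxinj hyinj hdisj hxadj hyadj
  have hk0 : 0 < k := by omega
  have hμk : (r : ℝ) + 2 ≤ μ * k := by
    have h1 : ((r : ℝ) + 2) / μ ≤ (⌈((r : ℝ) + 2) / μ⌉₊ : ℝ) := Nat.le_ceil _
    have h2 : ((⌈((r : ℝ) + 2) / μ⌉₊ + 1 : ℕ) : ℝ) ≤ (k : ℝ) := by exact_mod_cast hk
    push_cast at h2
    have h3 : ((r : ℝ) + 2) / μ ≤ (k : ℝ) := by linarith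
    calc (r : ℝ) + 2 = (((r : ℝ) + 2) / μ) * μ := by field_simp
      _ ≤ (k : ℝ) * μ := by
          apply mul_le_mul_of_nonneg_right h3 hμ.le
      _ = μ * k := by ring
  set F : Finset (Fin k) := Finset.image y Finset.univ with hF
  have hFcard : (F.card : ℝ) ≤ (r : ℝ) := by
    have h1 : F.card ≤ r := by
      calc F.card ≤ (Finset.univ : Finset (Fin r)).card := Finset.card_image_le
        _ = r := by simp
    exact_mod_cast h1
  have hch : ∀ A : Finset (Fin k), A.card ≤ r → ∃ v, v ∉ F ∧ ∀ a ∈ A, R.Adj a v := by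
    intro A hA
    apply WkAux.choose_adj hk0 (by omega) R hdeg A F hA
    have hr1 : (1 : ℝ) ≤ (r : ℝ) := by exact_mod_cast (by omega : 1 ≤ r)
    have hk1 : (0 : ℝ) ≤ (k : ℝ) := by positivity
    nlinarith [hμk, hμ.le]
  set xf : ℕ → Fin k := fun m => if h : m < r then x ⟨m, h⟩ else y ⟨0, by omega⟩ with hxf
  set bf : ℕ → Fin k := fun s => y ⟨(r - s) % r, Nat.mod_lt _ (by omega)⟩ with hbf
  have hxfx : ∀ j : Fin r, xf j.val = x j := by
    intro j
    rw [hxf]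
    beta_reduce
    rw [dif_pos j.isLt]
  have hxfacts : ∀ i j, i < r → j < r → i ≠ j → xf i ≠ xf j ∧ R.Adj (xf i) (xf j) := by
    intro i j hi hj hij
    have hadj : R.Adj (x ⟨i, hi⟩) (x ⟨j, hj⟩) := hxadj _ _ (by simp [Fin.ext_iff]; omega)
    have e1 : xf i = x ⟨i, hi⟩ := by rw [hxf]; beta_reduce; rw [dif_pos hi]
    have e2 : xf j = x ⟨j, hj⟩ := by rw [hxf]; beta_reduce; rw [dif_pos hj]
    rw [e1, e2]
    exact ⟨hadj.ne, hadj⟩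
  have hbF : ∀ s, 1 ≤ s → s ≤ r → bf s ∈ F := by
    intro s h1 h2
    rw [hbf, hF]
    exact Finset.mem_image.2 ⟨_, Finset.mem_univ _, rfl⟩
  have hbadj : ∀ s t, 1 ≤ s → s ≤ r → 1 ≤ t → t ≤ r → s ≠ t →
      R.Adj (bf s) (bf t) := by
    intro s t h1 h2 h3 h4 h5
    rw [hbf]
    refine hyadj _ _ (fun heq => ?_)
    have hval : (r - s) % r = (r - t) % r := congrArg Fin.val heq
    have e1 : (r - s) % r = r - s := Nat.mod_eq_of_lt (by omega)
    have e2 : (r - t) % r = r - t := Nat.mod_eq_of_lt (by omega)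
    rw [e1, e2] at hval
    omega
  obtain ⟨S, ℓ, D, c, p, g, L, hgbig, hcrec, hℓ1, hℓ2⟩ :=
    WkAux.buildup (x := xf) hr hxfacts bf F hbF hbadj hch
  obtain ⟨hgood, hlast⟩ := WkAux.master (by omega) L.pairs L.hD (fun _ => L.hDr) L.hsp
    (fun d hd => by have := L.hgap d hd; omega)
  have hr5 : 2 * r + 2 + (r + 1) * (23 * (r + 1)) + 21 * (r + 1) ≤ 100 * r ^ 5 := by
    have h1 : r ^ 2 ≤ r ^ 5 := Nat.pow_le_pow_right (by omega) (by omega)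
    have h3 : 2 * r ≤ r ^ 2 := by
      rw [pow_two]
      exact Nat.mul_le_mul_right r hr
    rw [show 2 * r + 2 + (r + 1) * (23 * (r + 1)) + 21 * (r + 1)
        = 23 * r ^ 2 + 69 * r + 46 by ring]
    linarith [h1, h3, hr]
  refine ⟨ℓ, by omega, by omega, S, hgood, ?_, ?_, hlast⟩
  · intro j
    rw [L.hx j.val j.isLt]
    exact hxfx j
  · intro j
    have hq := L.hrec (r - 1 - j.val) (by omega)
    rw [show ℓ - 1 - (r - 1 - j.val) = ℓ - r + j.val by omega] at hq
    rw [hq, hcrec (r - 1 - j.val) (by omega)]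
    rw [show r - 1 - j.val + 1 = r - j.val by omega, hbf]
    refine congrArg y ?_
    apply Fin.ext
    show (r - (r - j.val)) % r = j.val
    rw [Nat.mod_eq_of_lt (by omega)]
    omega
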